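/- Let (𝒳,𝒜) be a measurable space and π a probability measure on 𝒳×{−1,1} such that the regression function η is measurable. Then the Bayes rule f*(x) = sign(2η(x)−1) attains the optimal hinge risk: A(f*) = A* = inf over all measurable f:𝒳→ℝ of A(f). -/

import Mathlib

open MeasureTheory
open scoped ENNReal NNReal

noncomputable section

namespace AggClass

variable {X : Type*} [MeasurableSpace X]

/-- The sign function, with the convention `sgn 0 = 1`. -/
def sgn (t : ℝ) : ℝ := if 0 ≤ t then 1 else -1

/-- The Bayes rule `f*(x) = sign (2 η x - 1)`. -/
def bayes (η : X → ℝ) : X → ℝ := fun x => sgn (2 * η x - 1)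

/-- The hinge risk `A(f) = E[max (1 - Y f(X)) 0]`, as an extended nonnegative real. -/
def hingeRiskE (π : Measure (X × ℝ)) (f : X → ℝ) : ℝ≥0∞ :=
  ∫⁻ p, ENNReal.ofReal (max (1 - p.2 * f p.1) 0) ∂π

/-- The optimal hinge risk `A* = inf {A(f) : f : X → ℝ measurable}`. -/
def optHingeRiskE (π : Measure (X × ℝ)) : ℝ≥0∞ :=
  ⨅ (f : X → ℝ) (_ : Measurable f), hingeRiskE π f

/-- The hinge risk, real-valued. -/
def hingeRisk (π : Measure (X × ℝ)) (f : X → ℝ) : ℝ := (hingeRiskE π f).toReal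

/-- The optimal hinge risk, real-valued. -/
def optHingeRisk (π : Measure (X × ℝ)) : ℝ := (optHingeRiskE π).toReal

/-- The misclassification risk `R(f) = π (Y ≠ sign (f X))`, ℝ≥0∞-valued. -/
def misRiskE (π : Measure (X × ℝ)) (f : X → ℝ) : ℝ≥0∞ :=
  π {p : X × ℝ | p.2 ≠ sgn (f p.1)}

/-- The misclassification risk, real-valued. -/
def misRisk (π : Measure (X × ℝ)) (f : X → ℝ) : ℝ := (misRiskE π f).toReal

/-- `π` is a joint law of a pair (X,Y) on `X × {-1,1}` with regression function
`η x = π(Y = 1 ∣ X = x)`. -/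
structure IsClassif (π : Measure (X × ℝ)) (η : X → ℝ) : Prop where
  labels : π {p : X × ℝ | p.2 = 1 ∨ p.2 = -1}ᶜ = 0
  meas : Measurable η
  mem01 : ∀ x, η x ∈ Set.Icc (0 : ℝ) 1
  cond : ∀ B : Set X, MeasurableSet B →
    π (B ×ˢ ({1} : Set ℝ)) = ∫⁻ x in B, ENNReal.ofReal (η x) ∂(π.map Prod.fst)

/-- Margin assumption MA(κ) with constant c₀ : for every measurable prediction rule
`f : X → {-1,1}`, `E[|f(X) - f*(X)|] ≤ c₀ (R(f) - R*)^(1/κ)`. -/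
def MA (π : Measure (X × ℝ)) (η : X → ℝ) (κ c₀ : ℝ) : Prop :=
  ∀ f : X → ℝ, Measurable f → (∀ x, f x = 1 ∨ f x = -1) →
    ∫ x, |f x - bayes η x| ∂(π.map Prod.fst)
      ≤ c₀ * (misRisk π f - misRisk π (bayes η)) ^ (1 / κ)

/-- Margin assumption for the hinge risk MAH(κ) with constant c : for every measurable
`f : X → [-1,1]`, `E[|f(X) - f*(X)|] ≤ c (A(f) - A*)^(1/κ)`. -/
def MAH (π : Measure (X × ℝ)) (η : X → ℝ) (κ c : ℝ) : Prop :=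
  ∀ f : X → ℝ, Measurable f → (∀ x, f x ∈ Set.Icc (-1 : ℝ) 1) →
    ∫ x, |f x - bayes η x| ∂(π.map Prod.fst)
      ≤ c * (hingeRisk π f - optHingeRisk π) ^ (1 / κ)

/-- Convex combination of f₁,…,f_M with weights w. -/
def convComb {M : ℕ} (f : Fin M → X → ℝ) (w : Fin M → ℝ) : X → ℝ :=
  fun x => ∑ j, w j * f j x

/-- The set of hinge risks of the elements of the convex hull of f₁,…,f_M. -/
def convRiskSet (π : Measure (X × ℝ)) {M : ℕ} (f : Fin M → X → ℝ) : Set ℝ :=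
  {a | ∃ w : Fin M → ℝ, (∀ j, 0 ≤ w j) ∧ (∑ j, w j) = 1 ∧ a = hingeRisk π (convComb f w)}

/-- The law of an i.i.d. sample of size n from π. -/
def sample {α : Type*} [MeasurableSpace α] (π : Measure α) [SigmaFinite π] (n : ℕ) :
    Measure (Fin n → α) :=
  Measure.pi fun _ => π

/-- The empirical hinge risk on the sample D. -/
def empHinge {n : ℕ} (D : Fin n → X × ℝ) (f : X → ℝ) : ℝ :=
  (n : ℝ)⁻¹ * ∑ i, max (1 - (D i).2 * f (D i).1) 0

/-- The empirical misclassification risk on the sample D. -/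
def empMis {n : ℕ} (D : Fin n → X × ℝ) (f : X → ℝ) : ℝ :=
  (n : ℝ)⁻¹ * ∑ i, if (D i).2 ≠ f (D i).1 then (1 : ℝ) else 0

/-- The set of indices minimizing the empirical hinge risk. -/
def ermSet {n M : ℕ} (f : Fin M → X → ℝ) (D : Fin n → X × ℝ) : Finset (Fin M) :=
  Finset.univ.filter fun j => ∀ k, empHinge D (f j) ≤ empHinge D (f k)

/-- `tf` is an empirical risk minimization (ERM) aggregate for the hinge loss. -/
def IsERM {n M : ℕ} (f : Fin M → X → ℝ) (tf : (Fin n → X × ℝ) → X → ℝ) : Prop :=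
  ∀ D, ∃ j ∈ ermSet f D, tf D = f j

/-- `tf` is the averaged ERM (AERM) aggregate for the hinge loss. -/
def IsAERM {n M : ℕ} (f : Fin M → X → ℝ) (tf : (Fin n → X × ℝ) → X → ℝ) : Prop :=
  ∀ D, tf D = fun x => ((ermSet f D).card : ℝ)⁻¹ * ∑ j ∈ ermSet f D, f j x

/-- The exponential weights for the hinge loss. -/
def aewWeight {n M : ℕ} (f : Fin M → X → ℝ) (D : Fin n → X × ℝ) (j : Fin M) : ℝ :=
  Real.exp (-(n : ℝ) * empHinge D (f j)) / ∑ k, Real.exp (-(n : ℝ) * empHinge D (f k))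

/-- `tf` is the aggregation-with-exponential-weights (AEW) aggregate for the hinge loss. -/
def IsAEW {n M : ℕ} (f : Fin M → X → ℝ) (tf : (Fin n → X × ℝ) → X → ℝ) : Prop :=
  ∀ D, tf D = fun x => ∑ j, aewWeight f D j * f j x

/-- Empirical hinge risk on the first k observations of the sample D. -/
def empHingeK {n : ℕ} (D : Fin n → X × ℝ) (k : ℕ) (f : X → ℝ) : ℝ :=
  (k : ℝ)⁻¹ * ∑ i ∈ Finset.univ.filter (fun i : Fin n => (i : ℕ) < k),
    max (1 - (D i).2 * f (D i).1) 0

/-- The cumulative exponential weights for the hinge loss. -/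
def caewWeight {n M : ℕ} (f : Fin M → X → ℝ) (D : Fin n → X × ℝ) (j : Fin M) : ℝ :=
  (n : ℝ)⁻¹ * ∑ k ∈ Finset.Icc 1 n,
    Real.exp (-(k : ℝ) * empHingeK D k (f j)) /
      ∑ l, Real.exp (-(k : ℝ) * empHingeK D k (f l))

lemma measurable_bayes {η : X → ℝ} (hη : Measurable η) : Measurable (bayes η) := by
  unfold bayes sgn
  exact Measurable.ite (measurableSet_le measurable_const (by fun_prop))
    measurable_const measurable_const

lemma key_ineq (a t : ℝ) (h0 : 0 ≤ a) (h1 : a ≤ 1) :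
    a * max (1 - sgn (2 * a - 1)) 0 + (1 - a) * max (1 + sgn (2 * a - 1)) 0
      ≤ a * max (1 - t) 0 + (1 - a) * max (1 + t) 0 := by
  have hu1 := le_max_left (1 - t) 0
  have hu0 := le_max_right (1 - t) 0
  have hv1 := le_max_left (1 + t) 0
  have hv0 := le_max_right (1 + t) 0
  unfold sgn
  split_ifs with h
  · norm_num
    nlinarith
  · norm_num
    nlinarith

lemma label_neg (π : Measure (X × ℝ)) [IsProbabilityMeasure π] (η : X → ℝ)
    (hπ : IsClassif π η) (B : Set X) (hB : MeasurableSet B) :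
    π (B ×ˢ ({-1} : Set ℝ)) = ∫⁻ x in B, ENNReal.ofReal (1 - η x) ∂(π.map Prod.fst) := by
  set μ := π.map Prod.fst with hμ
  have hμB : μ B = π (B ×ˢ (Set.univ : Set ℝ)) := by
    rw [Measure.map_apply measurable_fst hB, ← Set.prod_univ]
  have hdisj : Disjoint (B ×ˢ ({1} : Set ℝ)) (B ×ˢ ({-1} : Set ℝ)) := by
    apply Set.disjoint_left.2
    rintro ⟨x, y⟩ ⟨_, hy1⟩ ⟨_, hy2⟩
    simp only [Set.mem_singleton_iff] at hy1 hy2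
    norm_num [hy1] at hy2
  have hunion : π (B ×ˢ (Set.univ : Set ℝ)) =
      π (B ×ˢ ({1} : Set ℝ)) + π (B ×ˢ ({-1} : Set ℝ)) := by
    have hsub : B ×ˢ (Set.univ : Set ℝ) ⊆
        (B ×ˢ ({1} : Set ℝ) ∪ B ×ˢ ({-1} : Set ℝ)) ∪ {p : X × ℝ | p.2 = 1 ∨ p.2 = -1}ᶜ := by
      rintro ⟨x, y⟩ ⟨hx, -⟩
      by_cases hy : y = 1 ∨ y = -1
      · rcases hy with hy | hy
        · exact Or.inl (Or.inl ⟨hx, hy⟩)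
        · exact Or.inl (Or.inr ⟨hx, hy⟩)
      · exact Or.inr hy
    apply le_antisymm
    · calc π (B ×ˢ (Set.univ : Set ℝ))
          ≤ π (B ×ˢ ({1} : Set ℝ) ∪ B ×ˢ ({-1} : Set ℝ)) +
              π {p : X × ℝ | p.2 = 1 ∨ p.2 = -1}ᶜ :=
            le_trans (measure_mono hsub) (measure_union_le _ _)
      _ = π (B ×ˢ ({1} : Set ℝ) ∪ B ×ˢ ({-1} : Set ℝ)) := by rw [hπ.labels, add_zero]
      _ = π (B ×ˢ ({1} : Set ℝ)) + π (B ×ˢ ({-1} : Set ℝ)) :=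
            measure_union hdisj (hB.prod (measurableSet_singleton _))
    · rw [← measure_union hdisj (hB.prod (measurableSet_singleton _))]
      exact measure_mono (Set.union_subset (Set.prod_mono_right (by simp))
        (Set.prod_mono_right (by simp)))
  have hsum : (∫⁻ x in B, ENNReal.ofReal (η x) ∂μ) +
      (∫⁻ x in B, ENNReal.ofReal (1 - η x) ∂μ) = μ B := by
    rw [← lintegral_add_left hπ.meas.ennreal_ofReal]
    have : ∀ x, ENNReal.ofReal (η x) + ENNReal.ofReal (1 - η x) = 1 := by
      intro x
      rw [← ENNReal.ofReal_add (hπ.mem01 x).1 (by linarith [(hπ.mem01 x).2])]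
      norm_num
    simp only [this]
    simp [Measure.restrict_apply_univ]
  have hfin : π (B ×ˢ ({1} : Set ℝ)) ≠ ⊤ := (measure_lt_top π _).ne
  have key : π (B ×ˢ ({1} : Set ℝ)) + π (B ×ˢ ({-1} : Set ℝ))
      = π (B ×ˢ ({1} : Set ℝ)) + ∫⁻ x in B, ENNReal.ofReal (1 - η x) ∂μ := by
    rw [← hunion, ← hμB, ← hsum, ← hπ.cond B hB]
  exact (ENNReal.add_right_inj hfin).mp key

lemma hinge_repr (π : Measure (X × ℝ)) [IsProbabilityMeasure π] (η : X → ℝ)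
    (hπ : IsClassif π η) (f : X → ℝ) (hf : Measurable f) :
    hingeRiskE π f = ∫⁻ x, ENNReal.ofReal (η x) * ENNReal.ofReal (max (1 - f x) 0)
      + ENNReal.ofReal (1 - η x) * ENNReal.ofReal (max (1 + f x) 0) ∂(π.map Prod.fst) := by
  set μ := π.map Prod.fst with hμ
  set S1 : Set (X × ℝ) := Prod.snd ⁻¹' {1} with hS1
  set S2 : Set (X × ℝ) := Prod.snd ⁻¹' {-1} with hS2
  have hmS1 : MeasurableSet S1 := measurable_snd (measurableSet_singleton _)
  have hmS2 : MeasurableSet S2 := measurable_snd (measurableSet_singleton _)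
  have hdisj : Disjoint S1 S2 := by
    apply Set.disjoint_left.2
    rintro ⟨x, y⟩ h1 h2
    simp only [hS1, hS2, Set.mem_preimage, Set.mem_singleton_iff] at h1 h2
    norm_num [h1] at h2
  -- the two conditional measures
  have hν1 : (π.restrict S1).map Prod.fst
      = μ.withDensity (fun x => ENNReal.ofReal (η x)) := by
    ext B hB
    rw [Measure.map_apply measurable_fst hB, Measure.restrict_apply (measurable_fst hB),
      withDensity_apply _ hB]
    have : Prod.fst ⁻¹' B ∩ S1 = B ×ˢ ({1} : Set ℝ) := by
      rw [Set.prod_eq]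
    rw [this, hπ.cond B hB]
  have hν2 : (π.restrict S2).map Prod.fst
      = μ.withDensity (fun x => ENNReal.ofReal (1 - η x)) := by
    ext B hB
    rw [Measure.map_apply measurable_fst hB, Measure.restrict_apply (measurable_fst hB),
      withDensity_apply _ hB]
    have : Prod.fst ⁻¹' B ∩ S2 = B ×ˢ ({-1} : Set ℝ) := by
      rw [Set.prod_eq]
    rw [this, label_neg π η hπ B hB]
  -- decompose the integral
  have hrestr : π.restrict (S1 ∪ S2) = π := by
    apply Measure.restrict_eq_self_of_ae_mem
    rw [Filter.eventually_iff, mem_ae_iff]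
    have : {p : X × ℝ | p ∈ S1 ∪ S2}ᶜ = {p : X × ℝ | p.2 = 1 ∨ p.2 = -1}ᶜ := by
      ext p; simp [hS1, hS2]
    rw [this]; exact hπ.labels
  have hmg1 : Measurable fun x => ENNReal.ofReal (max (1 - f x) 0) := by fun_prop
  have hmg2 : Measurable fun x => ENNReal.ofReal (max (1 + f x) 0) := by fun_prop
  calc hingeRiskE π f
      = ∫⁻ p, ENNReal.ofReal (max (1 - p.2 * f p.1) 0) ∂(π.restrict (S1 ∪ S2)) := by
        rw [hrestr]; rfl
    _ = (∫⁻ p in S1, ENNReal.ofReal (max (1 - p.2 * f p.1) 0) ∂π)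
        + ∫⁻ p in S2, ENNReal.ofReal (max (1 - p.2 * f p.1) 0) ∂π := by
        rw [Measure.restrict_union hdisj hmS2, lintegral_add_measure]
    _ = (∫⁻ p in S1, ENNReal.ofReal (max (1 - f p.1) 0) ∂π)
        + ∫⁻ p in S2, ENNReal.ofReal (max (1 + f p.1) 0) ∂π := by
        congr 1
        · apply setLIntegral_congr_fun hmS1
          intro p hp
          simp only [hS1, Set.mem_preimage, Set.mem_singleton_iff] at hp
          dsimp only; rw [hp, one_mul]
        · apply setLIntegral_congr_fun hmS2
          intro p hp
          simp only [hS2, Set.mem_preimage, Set.mem_singleton_iff] at hp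
          dsimp only; rw [hp]; ring_nf
    _ = (∫⁻ x, ENNReal.ofReal (max (1 - f x) 0) ∂((π.restrict S1).map Prod.fst))
        + ∫⁻ x, ENNReal.ofReal (max (1 + f x) 0) ∂((π.restrict S2).map Prod.fst) := by
        rw [lintegral_map hmg1 measurable_fst, lintegral_map hmg2 measurable_fst]
    _ = (∫⁻ x, ENNReal.ofReal (η x) * ENNReal.ofReal (max (1 - f x) 0) ∂μ)
        + ∫⁻ x, ENNReal.ofReal (1 - η x) * ENNReal.ofReal (max (1 + f x) 0) ∂μ := by
        rw [hν1, hν2,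
          lintegral_withDensity_eq_lintegral_mul _ hπ.meas.ennreal_ofReal hmg1,
          lintegral_withDensity_eq_lintegral_mul _
            (show Measurable fun x => ENNReal.ofReal (1 - η x) by have := hπ.meas; fun_prop) hmg2]
        rfl
    _ = _ := by
        rw [← lintegral_add_left (show Measurable fun x =>
          ENNReal.ofReal (η x) * ENNReal.ofReal (max (1 - f x) 0) by have := hπ.meas; fun_prop)]

/-- The Bayes rule attains the optimal hinge risk: A(f*) = A*. -/
theorem bayes_rule_attains_optimal_hinge_risk
    (π : Measure (X × ℝ)) [IsProbabilityMeasure π] (η : X → ℝ)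
    (hπ : IsClassif π η) :
    hingeRiskE π (bayes η) = optHingeRiskE π := by
  apply le_antisymm
  · apply le_iInf₂
    intro f hf
    rw [hinge_repr π η hπ _ (measurable_bayes hπ.meas), hinge_repr π η hπ f hf]
    apply lintegral_mono
    intro x
    have h0 := (hπ.mem01 x).1
    have h1 := (hπ.mem01 x).2
    have key := key_ineq (η x) (f x) h0 h1
    calc ENNReal.ofReal (η x) * ENNReal.ofReal (max (1 - bayes η x) 0)
          + ENNReal.ofReal (1 - η x) * ENNReal.ofReal (max (1 + bayes η x) 0)
        = ENNReal.ofReal (η x * max (1 - bayes η x) 0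
            + (1 - η x) * max (1 + bayes η x) 0) := by
          rw [← ENNReal.ofReal_mul h0, ← ENNReal.ofReal_mul (by linarith),
            ENNReal.ofReal_add (mul_nonneg h0 (le_max_right _ _))
              (mul_nonneg (by linarith) (le_max_right _ _))]
      _ ≤ ENNReal.ofReal (η x * max (1 - f x) 0 + (1 - η x) * max (1 + f x) 0) := by
          exact ENNReal.ofReal_le_ofReal key
      _ = ENNReal.ofReal (η x) * ENNReal.ofReal (max (1 - f x) 0)
          + ENNReal.ofReal (1 - η x) * ENNReal.ofReal (max (1 + f x) 0) := by
          rw [← ENNReal.ofReal_mul h0, ← ENNReal.ofReal_mul (by linarith),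
            ENNReal.ofReal_add (mul_nonneg h0 (le_max_right _ _))
              (mul_nonneg (by linarith) (le_max_right _ _))]
  · exact iInf₂_le (bayes η) (measurable_bayes hπ.meas)

end AggClass
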